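/- Let X and n be finite types, let λ, μ : X → ℝ with λ x ≥ 0 and μ x > 0 for all x, let κ > 0 and d > 0 be reals with λ x ≤ κ · μ x for all x, and let σ : X → Matrix n n ℂ with σ x positive semidefinite for all x. Let Π and Π_x (for x : X) be orthogonal projections such that Π_x * σ x * Π_x ≤ (1/d) • Π_x and Π_x * σ x * Π_x ≤ σ x in the Loewner order for all x. Set σ̄ := ∑_x (λ x) • σ x and σ̃ x := Π * Π_x * σ x * Π_x * Π. Then (κ/d) • (Π * σ̄ * Π) − ∑_x ((λ x)²/(μ x)) • (σ̃ x * σ̃ x) is positive semidefinite. -/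

import Mathlib

open Matrix
open scoped ComplexOrder

private lemma psd_real_smul {n : Type*} [Fintype n] {M : Matrix n n ℂ}
    (hM : M.PosSemidef) {r : ℝ} (hr : 0 ≤ r) : (r • M).PosSemidef := by
  refine posSemidef_iff_dotProduct_mulVec.mpr ⟨?_, fun x => ?_⟩
  · unfold Matrix.IsHermitian
    rw [conjTranspose_smul, hM.1.eq, star_trivial]
  · rw [smul_mulVec, dotProduct_smul]
    rw [show r • (star x ⬝ᵥ M *ᵥ x) = (r:ℂ) * (star x ⬝ᵥ M *ᵥ x) from Complex.real_smul ..]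
    exact mul_nonneg (by exact_mod_cast hr) (hM.dotProduct_mulVec_nonneg x)

private lemma psd_sum {X n : Type*} [Fintype X] [Fintype n] {f : X → Matrix n n ℂ}
    (hf : ∀ x, (f x).PosSemidef) : (∑ x, f x).PosSemidef := by
  classical
  exact Finset.sum_induction f _ (fun a b ha hb => ha.add hb) Matrix.PosSemidef.zero
    (fun x _ => hf x)

set_option maxHeartbeats 1000000 in
/-- The operator inequality (eq. (26), 'bound_expec_sigma') in the paper's proof of its
Covering Lemma: the second moment `∑ₓ (λₓ²/μₓ) σ̃ₓ²` of the change-of-measure weighted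
cut-down operators `σ̃ₓ = Π Πₓ σₓ Πₓ Π` is dominated by `(κ/d) Π σ̄ Π` in the Loewner
order. -/
theorem second_moment_operator_bound
    {X : Type*} [Fintype X]
    {n : Type*} [Fintype n] [DecidableEq n]
    (lam μ : X → ℝ) (hlam0 : ∀ x, 0 ≤ lam x) (hμ0 : ∀ x, 0 < μ x)
    (κ d : ℝ) (hκ : 0 < κ) (hd : 0 < d)
    (hκμ : ∀ x, lam x ≤ κ * μ x)
    (σ : X → Matrix n n ℂ) (hσ : ∀ x, (σ x).PosSemidef)
    (P : Matrix n n ℂ) (hP : Pᴴ = P ∧ P * P = P)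
    (Px : X → Matrix n n ℂ) (hPx : ∀ x, (Px x)ᴴ = Px x ∧ Px x * Px x = Px x)
    (h3 : ∀ x, ((1 / d) • Px x - Px x * σ x * Px x).PosSemidef)
    (h4 : ∀ x, (σ x - Px x * σ x * Px x).PosSemidef) :
    ((κ / d) • (P * (∑ x, lam x • σ x) * P) -
      ∑ x, ((lam x) ^ 2 / μ x) • ((P * Px x * σ x * Px x * P) *
        (P * Px x * σ x * Px x * P))).PosSemidef := by
  obtain ⟨hPH, hPP⟩ := hP
  have hIP : (1 - P).PosSemidef := by
    have h : (1 - P)ᴴ * (1 - P) = 1 - P := by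
      rw [conjTranspose_sub, conjTranspose_one, hPH, sub_mul, one_mul, mul_sub, mul_one, hPP]
      abel
    rw [← h]
    exact posSemidef_conjTranspose_mul_self _
  have key : ∀ x, ((κ * lam x / d) • (P * σ x * P) -
      (lam x ^ 2 / μ x) • ((P * Px x * σ x * Px x * P) *
        (P * Px x * σ x * Px x * P))).PosSemidef := by
    intro x
    obtain ⟨hPxH, hPxP⟩ := hPx x
    set A := Px x * σ x * Px x with hA_def
    have hA : A.PosSemidef := by
      have h := (hσ x).mul_mul_conjTranspose_same (Px x)
      rw [hPxH] at h
      exact h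
    have hPxA : Px x * A = A := by rw [hA_def, ← mul_assoc, ← mul_assoc, hPxP]
    open scoped MatrixOrder in
    set S := CFC.sqrt A with hS_def
    open scoped MatrixOrder in
    have hS : S * S = A := CFC.sqrt_mul_sqrt_self A hA.nonneg
    open scoped MatrixOrder in
    have hSH : Sᴴ = S := (CFC.sqrt_nonneg A).posSemidef.1
    -- the projection Px x acts as identity on the range of S
    have hT0 : (1 - Px x) * S = 0 := by
      apply Matrix.self_mul_conjTranspose_eq_zero.mp
      rw [conjTranspose_mul, hSH, conjTranspose_sub, conjTranspose_one, hPxH]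
      calc (1 - Px x) * S * (S * (1 - Px x))
          = (1 - Px x) * A * (1 - Px x) := by rw [← hS]; simp only [Matrix.mul_assoc]
        _ = 0 := by rw [sub_mul, one_mul, hPxA, sub_self, zero_mul]
    have hPxS : Px x * S = S := by
      rw [sub_mul, one_mul, sub_eq_zero] at hT0
      exact hT0.symm
    have hSPx : S * Px x = S := by
      have h := congrArg conjTranspose hPxS
      rwa [conjTranspose_mul, hSH, hPxH] at h
    -- key1 : A² ≤ (1/d) A
    have key1 : ((1 / d) • A - A * A).PosSemidef := by
      have h := (h3 x).mul_mul_conjTranspose_same S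
      rw [hSH, ← hA_def] at h
      have e : S * ((1 / d) • Px x - A) * S = (1 / d) • A - A * A := by
        rw [mul_sub, sub_mul, Matrix.mul_smul, Matrix.smul_mul]
        congr 1
        · rw [hSPx, hS]
        · rw [← hS]; simp only [Matrix.mul_assoc]
      rwa [e] at h
    -- piece 1
    have p1 : (P * (A * (A * P)) - P * (A * (P * (A * P)))).PosSemidef := by
      have h := hIP.mul_mul_conjTranspose_same (P * A)
      have e : (P * A) * (1 - P) * (P * A)ᴴ
          = P * (A * (A * P)) - P * (A * (P * (A * P))) := by
        rw [conjTranspose_mul, hA.1.eq, hPH]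
        simp only [mul_sub, sub_mul, mul_one, one_mul, Matrix.mul_assoc]
      rwa [e] at h
    -- piece 2
    have p2 : ((1 / d) • (P * (A * P)) - P * (A * (A * P))).PosSemidef := by
      have h := key1.mul_mul_conjTranspose_same P
      rw [hPH] at h
      have e : P * ((1 / d) • A - A * A) * P
          = (1 / d) • (P * (A * P)) - P * (A * (A * P)) := by
        rw [mul_sub, sub_mul, Matrix.mul_smul, Matrix.smul_mul]
        simp only [Matrix.mul_assoc]
      rwa [e] at h
    -- piece 3
    have p3 : (P * (σ x * P) - P * (A * P)).PosSemidef := by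
      have h := (h4 x).mul_mul_conjTranspose_same P
      rw [hPH, ← hA_def] at h
      have e : P * (σ x - A) * P = P * (σ x * P) - P * (A * P) := by
        rw [mul_sub, sub_mul]
        simp only [Matrix.mul_assoc]
      rwa [e] at h
    -- piece 4
    have p4 : (P * (σ x * P)).PosSemidef := by
      have h := (hσ x).mul_mul_conjTranspose_same P
      rw [hPH, mul_assoc] at h
      exact h
    -- nonneg coefficients
    set c := lam x ^ 2 / μ x with hc_def
    have hc0 : 0 ≤ c := div_nonneg (sq_nonneg _) (hμ0 x).le
    have hcle : c ≤ κ * lam x := by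
      rw [hc_def, div_le_iff₀ (hμ0 x)]
      nlinarith [hlam0 x, hκμ x, (hμ0 x).le]
    have hcoef : 0 ≤ κ * lam x / d - c / d := by
      rw [sub_nonneg, div_le_div_iff₀ hd hd]
      nlinarith
    -- the expression for σ̃²
    have hEE : (P * Px x * σ x * Px x * P) * (P * Px x * σ x * Px x * P)
        = P * (A * (P * (A * P))) := by
      rw [hA_def]
      simp only [Matrix.mul_assoc]
      rw [← Matrix.mul_assoc P P, hPP]
    have decomp : (κ * lam x / d) • (P * σ x * P) -
        c • ((P * Px x * σ x * Px x * P) * (P * Px x * σ x * Px x * P))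
        = c • (P * (A * (A * P)) - P * (A * (P * (A * P))))
          + c • ((1 / d) • (P * (A * P)) - P * (A * (A * P)))
          + (c / d) • (P * (σ x * P) - P * (A * P))
          + (κ * lam x / d - c / d) • (P * (σ x * P)) := by
      rw [hEE, Matrix.mul_assoc P (σ x) P]
      match_scalars <;> ring
    rw [decomp]
    exact (((psd_real_smul p1 hc0).add (psd_real_smul p2 hc0)).add
      (psd_real_smul p3 (div_nonneg hc0 hd.le))).add (psd_real_smul p4 hcoef)
  have hfinal : (κ / d) • (P * (∑ x, lam x • σ x) * P)
      = ∑ x, (κ * lam x / d) • (P * σ x * P) := by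
    rw [Matrix.mul_sum, Matrix.sum_mul, Finset.smul_sum]
    refine Finset.sum_congr rfl fun x _ => ?_
    rw [Matrix.mul_smul, Matrix.smul_mul, smul_smul]
    congr 1
    ring
  rw [hfinal, ← Finset.sum_sub_distrib]
  exact psd_sum key
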